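/- Let X be a simply connected, locally path-connected metric space, and let Ω₁,…,Ω_q be pairwise disjoint, non-empty, open, connected subsets with Ω_i = interior(closure(Ω_i)) for each i and with the union of the closures of all Ω_i equal to X. If the set Σ = ∪_i ∂Ω_i is disconnected, then there exist a partition of {1,…,q} into three non-empty sets I, {ℓ}, J such that X is the disjoint union of ∪_{i∈I} closure(Ω_i), Ω_ℓ, and ∪_{j∈J} closure(Ω_j), and ∂Ω_ℓ is the disjoint union of the two non-empty sets ∂(∪_{i∈I} closure(Ω_i)) and ∂(∪_{j∈J} closure(Ω_j)). -/

import Mathlib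

open Set Complex

noncomputable section

namespace PartitionAux


lemma exp_arg_unit {z : ℂ} (hz : ‖z‖ = 1) : Complex.exp (z.arg * Complex.I) = z := by
  have h0 : z ≠ 0 := by
    intro h; rw [h] at hz; simp at hz
  have h1 : ‖z‖ = 1 := hz
  have := Complex.norm_mul_exp_arg_mul_I z
  rw [h1] at this
  simpa using this

lemma unit_slit {z : ℂ} (hz : ‖z‖ = 1) (hz1 : z ≠ -1) : z ∈ Complex.slitPlane := by
  rw [Complex.mem_slitPlane_iff]
  by_contra h
  push_neg at h
  obtain ⟨h1, h2⟩ := h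
  have hre : z = (z.re : ℂ) := Complex.ext rfl (by simp [h2])
  rw [hre] at hz
  rw [Complex.norm_real] at hz
  rw [Real.norm_eq_abs] at hz
  have : z.re = -1 := by
    rcases abs_eq (by norm_num : (0:ℝ) ≤ 1) |>.mp hz with h | h
    · nlinarith
    · exact h
  apply hz1
  rw [hre, this]; norm_num

lemma unit_div_slit {a b : ℂ} (ha : ‖a‖ = 1) (hb : ‖b‖ = 1) (hd : ‖a - b‖ < 2) :
    ‖a / b‖ = 1 ∧ a / b ∈ Complex.slitPlane := by
  have hb0 : b ≠ 0 := by intro h; rw [h] at hb; simp at hb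
  have hn : ‖a / b‖ = 1 := by rw [norm_div, ha, hb]; norm_num
  refine ⟨hn, unit_slit hn ?_⟩
  intro h
  have hab : a = -b := by
    field_simp at h
    linear_combination h
  rw [hab] at hd
  have : ‖-b - b‖ = 2 := by
    have : -b - b = (-2 : ℂ) * b := by ring
    rw [this, norm_mul, hb]
    simp
  linarith

/-- Continuous integer-valued function on a preconnected set is constant. -/
lemma int_valued_const {Y : Type*} [TopologicalSpace Y] {s : Set Y} (hs : IsPreconnected s)
    {v : Y → ℝ} (hv : ContinuousOn v s) (hint : ∀ x ∈ s, ∃ k : ℤ, v x = k)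
    {x y : Y} (hx : x ∈ s) (hy : y ∈ s) : v x = v y := by
  have key : ∀ a b : Y, a ∈ s → b ∈ s → v a < v b → False := by
    intro a b hain hbin hlt
    have himg : IsPreconnected (v '' s) := hs.image v hv
    have hIcc : Icc (v a) (v b) ⊆ v '' s :=
      himg.Icc_subset ⟨a, hain, rfl⟩ ⟨b, hbin, rfl⟩
    obtain ⟨ka, hka⟩ := hint a hain
    obtain ⟨kb, hkb⟩ := hint b hbin
    have hkab : ka < kb := by
      rw [hka, hkb] at hlt
      exact_mod_cast hlt
    have hmem : v a + 1/2 ∈ Icc (v a) (v b) := by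
      constructor
      · linarith
      · rw [hka, hkb]
        have : (ka : ℝ) + 1 ≤ kb := by exact_mod_cast hkab
        linarith
    obtain ⟨z, hz, hvz⟩ := hIcc hmem
    obtain ⟨kz, hkz⟩ := hint z hz
    rw [hkz, hka] at hvz
    have : (2 * kz : ℝ) = 2 * ka + 1 := by linarith
    have : (2 * kz : ℤ) = 2 * ka + 1 := by exact_mod_cast this
    omega
  rcases lt_trichotomy (v x) (v y) with h | h | h
  · exact absurd (key x y hx hy h) (by simp)
  · exact h
  · exact absurd (key y x hy hx h) (by simp)

lemma exp_sub_exp {u v : ℝ} (h : Complex.exp (u * Complex.I) = Complex.exp (v * Complex.I)) :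
    ∃ k : ℤ, u - v = k * (2 * Real.pi) := by
  have : Complex.exp ((u - v : ℝ) * Complex.I) = 1 := by
    push_cast
    rw [sub_mul, Complex.exp_sub, h, div_self (Complex.exp_ne_zero _)]
  rw [Complex.exp_eq_one_iff] at this
  obtain ⟨n, hn⟩ := this
  have him := congrArg Complex.im hn
  simp [Complex.mul_im, Complex.mul_re] at him
  exact ⟨n, by linarith [him]⟩

lemma exp_int_shift (t : ℝ) (k : ℤ) :
    Complex.exp ((t - k * (2 * Real.pi) : ℝ) * Complex.I) = Complex.exp (t * Complex.I) := by
  push_cast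
  rw [sub_mul, Complex.exp_sub]
  have : Complex.exp ((k : ℂ) * (2 * Real.pi) * Complex.I) = 1 := by
    rw [Complex.exp_eq_one_iff]
    exact ⟨k, by push_cast; ring⟩
  rw [this, div_one]


/-- Lifting lemma: a continuous unit-norm function on a compact convex set admits a
continuous logarithm. -/
lemma exists_lift_convex {E : Type*} [NormedAddCommGroup E] [NormedSpace ℝ E]
    {C : Set E} (hconv : Convex ℝ C) (hcomp : IsCompact C) {c : E} (hc : c ∈ C)
    {g : E → ℂ} (hg : ContinuousOn g C) (hnorm : ∀ x ∈ C, ‖g x‖ = 1) :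
    ∃ θ : E → ℝ, ContinuousOn θ C ∧ ∀ x ∈ C, Complex.exp (θ x * Complex.I) = g x := by
  have hg0 : ∀ x ∈ C, g x ≠ 0 := fun x hx h0 => by
    have := hnorm x hx; rw [h0] at this; simp at this
  -- uniform continuity
  have huc : UniformContinuousOn g C := hcomp.uniformContinuousOn_of_continuous hg
  rw [Metric.uniformContinuousOn_iff] at huc
  obtain ⟨δ, hδ, hδ2⟩ := huc 2 (by norm_num)
  -- bound
  obtain ⟨r, hr⟩ := (Metric.isBounded_iff_subset_closedBall c).mp hcomp.isBounded
  have hr0 : 0 ≤ r := by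
    have := hr hc; simpa using this
  obtain ⟨n, hn⟩ := exists_nat_gt (r / δ)
  have hnpos : 0 < (n : ℝ) := lt_of_le_of_lt (div_nonneg hr0 hδ.le) hn
  have hn0 : (n : ℝ) ≠ 0 := ne_of_gt hnpos
  -- the interpolation points
  set P : ℕ → E → E := fun j x => c + ((j : ℝ) / n) • (x - c) with hP
  have hPmem : ∀ j : ℕ, j ≤ n → ∀ x ∈ C, P j x ∈ C := by
    intro j hj x hx
    have hj0 : (0:ℝ) ≤ (j : ℝ) / n := by positivity
    have hj1 : (j : ℝ) / n ≤ 1 := by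
      rw [div_le_one hnpos]; exact_mod_cast hj
    have heq : P j x = (1 - (j : ℝ)/n) • c + ((j : ℝ)/n) • x := by
      simp only [hP, smul_sub, sub_smul, one_smul]
      abel
    rw [heq]
    exact hconv hc hx (by linarith) hj0 (by ring)
  have hPdist : ∀ j : ℕ, ∀ x ∈ C, dist (P (j+1) x) (P j x) < δ := by
    intro j x hx
    have : P (j+1) x - P j x = ((1 : ℝ) / n) • (x - c) := by
      simp only [hP]
      rw [add_sub_add_left_eq_sub, ← sub_smul]
      congr 1
      push_cast
      ring
    rw [dist_eq_norm, this, norm_smul]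
    have hxc : ‖x - c‖ ≤ r := by
      have := hr hx
      rwa [Metric.mem_closedBall, dist_eq_norm] at this
    have h1n : ‖(1:ℝ)/n‖ = 1/n := by
      rw [Real.norm_eq_abs, abs_of_pos (by positivity)]
    rw [h1n]
    calc 1/(n:ℝ) * ‖x - c‖ ≤ 1/n * r := by
          apply mul_le_mul_of_nonneg_left hxc (by positivity)
      _ < δ := by
          rw [div_mul_eq_mul_div, one_mul, div_lt_iff₀ hnpos]
          calc r = (r/δ) * δ := by field_simp
            _ < n * δ := by apply mul_lt_mul_of_pos_right hn hδ
            _ = δ * n := by ring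
  -- the quotients
  set Q : ℕ → E → ℂ := fun j x => g (P (j+1) x) / g (P j x) with hQ
  have hQprop : ∀ j : ℕ, j + 1 ≤ n → ∀ x ∈ C, ‖Q j x‖ = 1 ∧ Q j x ∈ Complex.slitPlane := by
    intro j hj x hx
    have h1 : P (j+1) x ∈ C := hPmem _ hj x hx
    have h2 : P j x ∈ C := hPmem _ (by omega) x hx
    apply unit_div_slit (hnorm _ h1) (hnorm _ h2)
    have := hδ2 _ h1 _ h2 (hPdist j x hx)
    rwa [dist_eq_norm] at this
  -- the lift
  set θ : E → ℝ := fun x => (g c).arg + ∑ j ∈ Finset.range n, (Q j x).arg with hθ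
  have hPcont : ∀ j : ℕ, Continuous (fun x => P j x) := by
    intro j
    exact continuous_const.add (continuous_const.smul (continuous_id.sub continuous_const))
  have hQcont : ∀ j : ℕ, j + 1 ≤ n → ContinuousOn (fun x => Q j x) C := by
    intro j hj
    apply ContinuousOn.div
    · exact hg.comp (hPcont (j+1)).continuousOn (fun x hx => hPmem _ hj x hx)
    · exact hg.comp (hPcont j).continuousOn (fun x hx => hPmem _ (by omega) x hx)
    · intro x hx
      exact hg0 _ (hPmem _ (by omega) x hx)
  have hθcont : ContinuousOn θ C := by
    apply ContinuousOn.add continuousOn_const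
    apply continuousOn_finset_sum
    intro j hj
    rw [Finset.mem_range] at hj
    intro x hx
    exact (Complex.continuousAt_arg (hQprop j hj x hx).2).comp_continuousWithinAt
      ((hQcont j hj) x hx)
  refine ⟨θ, hθcont, ?_⟩
  intro x hx
  -- telescoping
  have key : ∀ k : ℕ, k ≤ n →
      Complex.exp (((g c).arg + ∑ j ∈ Finset.range k, (Q j x).arg : ℝ) * Complex.I)
        = g (P k x) := by
    intro k
    induction k with
    | zero =>
      intro _
      have hP0 : P 0 x = c := by simp [hP]
      simp only [Finset.range_zero, Finset.sum_empty, add_zero, hP0]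
      exact exp_arg_unit (hnorm c hc)
    | succ k ih =>
      intro hk
      have hk' : k ≤ n := by omega
      have hQk := hQprop k hk x hx
      have harg : Complex.exp (((Q k x).arg : ℝ) * Complex.I) = Q k x :=
        exp_arg_unit hQk.1
      rw [Finset.sum_range_succ]
      have : ((g c).arg + (∑ j ∈ Finset.range k, (Q j x).arg + (Q k x).arg) : ℝ)
          = ((g c).arg + ∑ j ∈ Finset.range k, (Q j x).arg) + (Q k x).arg := by ring
      rw [this]
      push_cast
      rw [add_mul, Complex.exp_add]
      have ihh := ih hk'
      push_cast at ihh
      rw [ihh, harg, hQ]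
      field_simp [hg0 _ (hPmem k hk' x hx)]
  have hPn : P n x = x := by
    simp only [hP]
    rw [div_self hn0, one_smul]
    abel
  have := key n le_rfl
  rw [hPn] at this
  exact this


lemma lift_unique {Y : Type*} [TopologicalSpace Y] {s : Set Y} (hs : IsPreconnected s)
    {θ₁ θ₂ : Y → ℝ} (h1 : ContinuousOn θ₁ s) (h2 : ContinuousOn θ₂ s)
    (he : ∀ x ∈ s, Complex.exp (θ₁ x * Complex.I) = Complex.exp (θ₂ x * Complex.I))
    {x₀ : Y} (hx₀ : x₀ ∈ s) (h0 : θ₁ x₀ = θ₂ x₀) : ∀ x ∈ s, θ₁ x = θ₂ x := by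
  have hpi := Real.pi_pos
  have h2π : (2 * Real.pi) ≠ 0 := by positivity
  have key : ∀ x ∈ s, ∃ k : ℤ, (θ₁ x - θ₂ x) / (2 * Real.pi) = k := by
    intro x hx
    obtain ⟨k, hk⟩ := exp_sub_exp (he x hx)
    exact ⟨k, by rw [hk]; field_simp⟩
  have hcont : ContinuousOn (fun x => (θ₁ x - θ₂ x) / (2 * Real.pi)) s :=
    (h1.sub h2).div_const _
  intro x hx
  have heq := int_valued_const hs hcont key hx hx₀
  have h0' : (θ₁ x₀ - θ₂ x₀) / (2 * Real.pi) = 0 := by rw [h0]; simp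
  rw [h0'] at heq
  have := div_eq_zero_iff.mp heq
  rcases this with h | h
  · linarith
  · exact absurd h h2π

lemma exists_path_lift {g : ℝ → ℂ} (hg : ContinuousOn g (Icc 0 1))
    (hnorm : ∀ t ∈ Icc (0:ℝ) 1, ‖g t‖ = 1) {a : ℝ}
    (ha : Complex.exp (a * Complex.I) = g 0) :
    ∃ θ : ℝ → ℝ, ContinuousOn θ (Icc 0 1) ∧ θ 0 = a ∧
      ∀ t ∈ Icc (0:ℝ) 1, Complex.exp (θ t * Complex.I) = g t := by
  have h01 : (0:ℝ) ∈ Icc (0:ℝ) 1 := by norm_num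
  obtain ⟨θ₀, hθc, hθe⟩ := exists_lift_convex (convex_Icc (0:ℝ) 1) isCompact_Icc h01 hg hnorm
  have h0 : Complex.exp (θ₀ 0 * Complex.I) = Complex.exp (a * Complex.I) := by
    rw [hθe 0 h01, ha]
  obtain ⟨k, hk⟩ := exp_sub_exp h0
  refine ⟨fun t => θ₀ t - k * (2 * Real.pi), hθc.sub continuousOn_const, by show θ₀ 0 - k * (2 * Real.pi) = a; linarith, ?_⟩
  intro t ht
  rw [exp_int_shift]
  exact hθe t ht

section Homotopy

variable {X : Type*} [TopologicalSpace X] [SimplyConnectedSpace X]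

lemma lift_endpoint_eq {f : X → ℂ} (hf : Continuous f) (hnorm : ∀ x, ‖f x‖ = 1)
    {x y : X} (γ₁ γ₂ : Path x y) {a : ℝ} {θ₁ θ₂ : ℝ → ℝ}
    (h1c : ContinuousOn θ₁ (Icc 0 1)) (h10 : θ₁ 0 = a)
    (h1e : ∀ t ∈ Icc (0:ℝ) 1, Complex.exp (θ₁ t * Complex.I) = f (γ₁.extend t))
    (h2c : ContinuousOn θ₂ (Icc 0 1)) (h20 : θ₂ 0 = a)
    (h2e : ∀ t ∈ Icc (0:ℝ) 1, Complex.exp (θ₂ t * Complex.I) = f (γ₂.extend t)) :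
    θ₁ 1 = θ₂ 1 := by
  obtain ⟨F⟩ : Path.Homotopic γ₁ γ₂ := SimplyConnectedSpace.paths_homotopic γ₁ γ₂
  set pr : ℝ → unitInterval := fun t => Set.projIcc 0 1 zero_le_one t with hpr
  have hpr0 : pr 0 = 0 := by simp [hpr]
  have hpr1 : pr 1 = 1 := by simp [hpr]
  set G : ℝ × ℝ → ℂ := fun p => f (F (pr p.1, pr p.2)) with hG
  have hGcont : Continuous G := by
    apply hf.comp
    apply F.continuous.comp
    exact ((continuous_projIcc.comp continuous_fst).prodMk
      (continuous_projIcc.comp continuous_snd))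
  set C : Set (ℝ × ℝ) := Icc 0 1 ×ˢ Icc 0 1 with hC
  have hCconv : Convex ℝ C := (convex_Icc (0:ℝ) 1).prod (convex_Icc (0:ℝ) 1)
  have hCcomp : IsCompact C := isCompact_Icc.prod isCompact_Icc
  have h01 : (0:ℝ) ∈ Icc (0:ℝ) 1 := by norm_num
  have h11 : (1:ℝ) ∈ Icc (0:ℝ) 1 := by norm_num
  have hc : ((0:ℝ), (0:ℝ)) ∈ C := ⟨h01, h01⟩
  obtain ⟨Θ, hΘc, hΘe⟩ := exists_lift_convex hCconv hCcomp hc hGcont.continuousOn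
    (fun p _ => hnorm _)
  -- values of G on edges
  have hG0 : ∀ s : ℝ, G (0, s) = f (γ₁.extend s) := by
    intro s
    show f (F (pr 0, pr s)) = f (γ₁.extend s)
    rw [hpr0, F.apply_zero (pr s)]
    rfl
  have hG1 : ∀ s : ℝ, G (1, s) = f (γ₂.extend s) := by
    intro s
    show f (F (pr 1, pr s)) = f (γ₂.extend s)
    rw [hpr1, F.apply_one (pr s)]
    rfl
  have hGbot : ∀ t : ℝ, G (t, 0) = f x := by
    intro t
    show f (F (pr t, pr 0)) = f x
    rw [hpr0, Path.Homotopy.source F (pr t)]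
  have hGtop : ∀ t : ℝ, G (t, 1) = f y := by
    intro t
    show f (F (pr t, pr 1)) = f y
    rw [hpr1, Path.Homotopy.target F (pr t)]
  -- bottom edge: Θ (·,0) is constant
  have hmapbot : ∀ t ∈ Icc (0:ℝ) 1, ((t, (0:ℝ)) : ℝ × ℝ) ∈ C := fun t ht => ⟨ht, h01⟩
  have hmaptop : ∀ t ∈ Icc (0:ℝ) 1, ((t, (1:ℝ)) : ℝ × ℝ) ∈ C := fun t ht => ⟨ht, h11⟩
  have hbotc : ContinuousOn (fun t : ℝ => Θ (t, 0)) (Icc 0 1) :=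
    hΘc.comp (continuous_id.prodMk continuous_const).continuousOn hmapbot
  have htopc : ContinuousOn (fun t : ℝ => Θ (t, 1)) (Icc 0 1) :=
    hΘc.comp (continuous_id.prodMk continuous_const).continuousOn hmaptop
  have hbot : Θ (1, 0) = Θ (0, 0) := by
    have := lift_unique (isPreconnected_Icc) hbotc continuousOn_const
      (θ₂ := fun _ => Θ (0, 0)) (fun t ht => by
        rw [hΘe _ (hmapbot t ht), hΘe _ hc, hGbot, hGbot]) h01 rfl
    exact this 1 h11
  have htop : Θ (1, 1) = Θ (0, 1) := by
    have h01C : ((0:ℝ), (1:ℝ)) ∈ C := ⟨h01, h11⟩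
    have := lift_unique (isPreconnected_Icc) htopc continuousOn_const
      (θ₂ := fun _ => Θ (0, 1)) (fun t ht => by
        rw [hΘe _ (hmaptop t ht), hΘe _ h01C, hGtop, hGtop]) h01 rfl
    exact this 1 h11
  -- left edge
  have hmapleft : ∀ s ∈ Icc (0:ℝ) 1, (((0:ℝ), s) : ℝ × ℝ) ∈ C := fun s hs => ⟨h01, hs⟩
  have hmapright : ∀ s ∈ Icc (0:ℝ) 1, (((1:ℝ), s) : ℝ × ℝ) ∈ C := fun s hs => ⟨h11, hs⟩
  have hleftc : ContinuousOn (fun s : ℝ => Θ (0, s)) (Icc 0 1) :=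
    hΘc.comp (continuous_const.prodMk continuous_id).continuousOn hmapleft
  have hrightc : ContinuousOn (fun s : ℝ => Θ (1, s)) (Icc 0 1) :=
    hΘc.comp (continuous_const.prodMk continuous_id).continuousOn hmapright
  have hexp00 : Complex.exp (Θ (0,0) * Complex.I) = Complex.exp (a * Complex.I) := by
    rw [hΘe _ hc, hGbot 0, ← h10, h1e 0 h01]
    congr 1
    exact (Path.extend_zero γ₁).symm
  obtain ⟨k, hk⟩ := exp_sub_exp hexp00
  have hleft : θ₁ 1 = Θ (0, 1) - k * (2 * Real.pi) := by
    have := lift_unique (isPreconnected_Icc)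
      (θ₁ := fun s : ℝ => Θ (0, s) - k * (2 * Real.pi)) (θ₂ := θ₁)
      (hleftc.sub continuousOn_const) h1c
      (fun s hs => by
        rw [exp_int_shift, hΘe _ (hmapleft s hs), h1e s hs, hG0])
      h01 (by show Θ (0,0) - k * (2*Real.pi) = θ₁ 0; rw [h10]; linarith)
    exact (this 1 h11).symm
  have hexp10 : Complex.exp (Θ (1,0) * Complex.I) = Complex.exp (a * Complex.I) := by
    rw [hΘe _ (hmapright 0 h01), hGbot 1, ← h20, h2e 0 h01]
    congr 1
    exact (Path.extend_zero γ₂).symm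
  obtain ⟨k', hk'⟩ := exp_sub_exp hexp10
  have hright : θ₂ 1 = Θ (1, 1) - k' * (2 * Real.pi) := by
    have := lift_unique (isPreconnected_Icc)
      (θ₁ := fun s : ℝ => Θ (1, s) - k' * (2 * Real.pi)) (θ₂ := θ₂)
      (hrightc.sub continuousOn_const) h2c
      (fun s hs => by
        rw [exp_int_shift, hΘe _ (hmapright s hs), h2e s hs, hG1])
      h01 (by show Θ (1,0) - k' * (2*Real.pi) = θ₂ 0; rw [h20]; linarith)
    exact (this 1 h11).symm
  rw [hleft, hright]
  linarith


end Homotopy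

/-- Monodromy: global continuous logarithm on a simply connected, locally
path-connected space. -/
lemma exists_global_lift {X : Type*} [TopologicalSpace X] [SimplyConnectedSpace X]
    [LocallyPathConnectedSpace X] {f : X → ℂ} (hf : Continuous f) (hnorm : ∀ x, ‖f x‖ = 1) :
    ∃ θ : X → ℝ, Continuous θ ∧ ∀ x, Complex.exp (θ x * Complex.I) = f x := by
  classical
  have hf0 : ∀ x, f x ≠ 0 := fun x h => by
    have := hnorm x; rw [h] at this; simp at this
  obtain ⟨x₀⟩ : Nonempty X := inferInstance
  set a₀ : ℝ := (f x₀).arg with ha₀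
  have ha₀e : Complex.exp (a₀ * Complex.I) = f x₀ := exp_arg_unit (hnorm x₀)
  have h01 : (0:ℝ) ∈ Icc (0:ℝ) 1 := by norm_num
  have h11 : (1:ℝ) ∈ Icc (0:ℝ) 1 := by norm_num
  have hlift : ∀ (x : X) (γ : Path x₀ x), ∃ θp : ℝ → ℝ, ContinuousOn θp (Icc 0 1) ∧
      θp 0 = a₀ ∧ ∀ t ∈ Icc (0:ℝ) 1, Complex.exp (θp t * Complex.I) = f (γ.extend t) := by
    intro x γ
    apply exists_path_lift ((hf.comp γ.continuous_extend).continuousOn) (fun t _ => hnorm _)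
    show Complex.exp ((a₀ : ℂ) * Complex.I) = f (γ.extend 0)
    rw [Path.extend_zero]; exact ha₀e
  set θ : X → ℝ := fun x => (hlift x (PathConnectedSpace.somePath x₀ x)).choose 1 with hθdef
  have hθchar : ∀ (x : X) (γ : Path x₀ x) (θp : ℝ → ℝ),
      ContinuousOn θp (Icc 0 1) → θp 0 = a₀ →
      (∀ t ∈ Icc (0:ℝ) 1, Complex.exp (θp t * Complex.I) = f (γ.extend t)) →
      θ x = θp 1 := by
    intro x γ θp hc h0 he
    obtain ⟨hc', h0', he'⟩ := (hlift x (PathConnectedSpace.somePath x₀ x)).choose_spec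
    exact lift_endpoint_eq hf hnorm _ γ hc' h0' he' hc h0 he
  have hθlift : ∀ x, Complex.exp (θ x * Complex.I) = f x := by
    intro x
    obtain ⟨hc', h0', he'⟩ := (hlift x (PathConnectedSpace.somePath x₀ x)).choose_spec
    have := he' 1 h11
    rwa [Path.extend_one] at this
  refine ⟨θ, ?_, hθlift⟩
  rw [continuous_iff_continuousAt]
  intro x
  set U : Set X := f ⁻¹' ({-f x}ᶜ) with hUdef
  have hUopen : IsOpen U := isOpen_compl_singleton.preimage hf
  have hxU : x ∈ U := by
    simp only [hUdef, mem_preimage, mem_compl_iff, mem_singleton_iff]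
    intro h
    apply hf0 x
    have : (2:ℂ) * f x = 0 := by rw [two_mul]; nth_rewrite 1 [h]; ring
    simpa using this
  obtain ⟨W, ⟨hWnhds, hWpc⟩, hWU⟩ :=
    (path_connected_basis x).mem_iff.mp (hUopen.mem_nhds hxU)
  have hxW : x ∈ W := mem_of_mem_nhds hWnhds
  have hformula : ∀ y ∈ W, θ y = θ x + ((f y) / (f x)).arg := by
    intro y hy
    obtain ⟨δ, hδW⟩ := hWpc.joinedIn x hxW y hy
    have hδU : ∀ s : ℝ, f (δ.extend s) ≠ -f x := by
      intro s
      exact hWU (hδW _)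
    have hzprop : ∀ s : ℝ, ‖f (δ.extend s) / f x‖ = 1 ∧
        f (δ.extend s) / f x ∈ Complex.slitPlane := by
      intro s
      have hn : ‖f (δ.extend s) / f x‖ = 1 := by
        rw [norm_div, hnorm, hnorm]; norm_num
      refine ⟨hn, unit_slit hn ?_⟩
      intro h
      apply hδU s
      rw [div_eq_iff (hf0 x)] at h
      rw [h]; ring
    set γx := PathConnectedSpace.somePath x₀ x with hγx
    obtain ⟨θγ, hθγc, hθγ0, hθγe⟩ := hlift x γx
    have hθx : θ x = θγ 1 := hθchar x γx θγ hθγc hθγ0 hθγe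
    set cl01 : ℝ → ℝ := fun s => max 0 (min s 1) with hcl01
    have hcl01cont : Continuous cl01 :=
      continuous_const.max (continuous_id.min continuous_const)
    have hcl01mem : ∀ s, cl01 s ∈ Icc (0:ℝ) 1 := by
      intro s
      constructor
      · exact le_max_left _ _
      · exact max_le (by norm_num) (min_le_right _ _)
    have hcl01id : ∀ s ∈ Icc (0:ℝ) 1, cl01 s = s := by
      intro s hs
      simp only [hcl01]
      rw [min_eq_left hs.2, max_eq_right hs.1]
    set θ'' : ℝ → ℝ := fun t => if t ≤ 1/2 then θγ (cl01 (2*t))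
      else θγ 1 + ((f (δ.extend (2*t - 1))) / (f x)).arg with hθ''
    have hF1c : Continuous (fun t : ℝ => θγ (cl01 (2*t))) := by
      apply hθγc.comp_continuous (hcl01cont.comp (continuous_const.mul continuous_id))
      intro t
      exact hcl01mem _
    have hzc : Continuous (fun t : ℝ => f (δ.extend (2*t - 1)) / f x) := by
      apply Continuous.div_const
      exact (hf.comp δ.continuous_extend).comp
        ((continuous_const.mul continuous_id).sub continuous_const)
    have hF2c : Continuous (fun t : ℝ => θγ 1 + ((f (δ.extend (2*t - 1))) / (f x)).arg) := by
      apply continuous_const.add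
      rw [continuous_iff_continuousAt]
      intro t
      exact ContinuousAt.comp (g := Complex.arg)
        (f := fun t : ℝ => f (δ.extend (2*t - 1)) / f x) (x := t)
        (Complex.continuousAt_arg (hzprop (2*t - 1)).2) hzc.continuousAt
    have hθ''c : Continuous θ'' :=
      Continuous.if_le hF1c hF2c continuous_id continuous_const (by
        intro t ht
        rw [ht]
        have h1 : 2 * (1/2 : ℝ) = 1 := by norm_num
        have h2 : 2 * (1/2 : ℝ) - 1 = 0 := by norm_num
        rw [h2, h1, hcl01id 1 h11, Path.extend_zero, div_self (hf0 x), Complex.arg_one]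
        ring)
    set γ' := γx.trans δ with hγ'
    have hθ''0 : θ'' 0 = a₀ := by
      simp only [hθ'']
      rw [if_pos (by norm_num : (0:ℝ) ≤ 1/2)]
      rw [mul_zero, hcl01id 0 h01, hθγ0]
    have hθ''e : ∀ t ∈ Icc (0:ℝ) 1, Complex.exp (θ'' t * Complex.I) = f (γ'.extend t) := by
      intro t ht
      have hext : γ'.extend t = γ' ⟨t, ht⟩ := Path.extend_apply γ' ht
      rw [hext, hγ', Path.trans_apply]
      by_cases h : (t : ℝ) ≤ 1/2
      · rw [dif_pos h]
        have h2t : 2*t ∈ Icc (0:ℝ) 1 := ⟨by linarith [ht.1], by linarith⟩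
        simp only [hθ'']
        rw [if_pos h, hcl01id _ h2t]
        have := hθγe (2*t) h2t
        rw [this]
        congr 1
        exact Path.extend_apply γx h2t
      · rw [dif_neg h]
        push_neg at h
        have h2t : 2*t - 1 ∈ Icc (0:ℝ) 1 := ⟨by linarith, by linarith [ht.2]⟩
        simp only [hθ'']
        rw [if_neg (by push_neg; exact h)]
        push_cast
        rw [add_mul, Complex.exp_add]
        rw [exp_arg_unit (hzprop (2*t-1)).1]
        have h1 := hθγe 1 h11
        rw [h1, Path.extend_one]
        rw [mul_comm, div_mul_cancel₀ _ (hf0 x)]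
        exact congrArg f (Path.extend_apply δ h2t)
    have hθy : θ y = θ'' 1 := hθchar y γ' θ'' hθ''c.continuousOn hθ''0 hθ''e
    rw [hθy]
    simp only [hθ'']
    rw [if_neg (by norm_num : ¬ (1:ℝ) ≤ 1/2)]
    have : 2 * (1:ℝ) - 1 = 1 := by norm_num
    rw [this, Path.extend_one, hθx]
  have hev : θ =ᶠ[nhds x] fun y => θ x + ((f y) / (f x)).arg :=
    Filter.eventuallyEq_of_mem hWnhds hformula
  have hcont2 : ContinuousAt (fun y => θ x + ((f y) / (f x)).arg) x := by
    apply ContinuousAt.add continuousAt_const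
    have hmem : f x / f x ∈ Complex.slitPlane := by
      rw [div_self (hf0 x)]
      rw [Complex.mem_slitPlane_iff]
      left; norm_num
    exact ContinuousAt.comp (g := Complex.arg) (f := fun y => f y / f x) (x := x)
      (Complex.continuousAt_arg hmem) (hf.continuousAt.div_const _)
  exact hcont2.congr hev.symm


end PartitionAux


open PartitionAux

/-- A `2`-connected partition of a simply connected space has connected
boundary: let `X` be a simply connected, locally path-connected metric space and let
`Ω₁, …, Ω_q` be pairwise disjoint, non-empty, open, connected subsets with
`Ω_i = interior (closure Ω_i)` and `⋃ᵢ closure Ω_i = X`. If `Σ = ⋃ᵢ ∂Ω_i` is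
disconnected, then there is a partition of the index set into non-empty sets `I`, `{ℓ}`,
`J` such that `X` is the disjoint union of `Ω̄_I`, `Ω_ℓ` and `Ω̄_J`, and `∂Ω_ℓ` is the
disjoint union of the two non-empty sets `∂Ω̄_I` and `∂Ω̄_J`. -/
theorem partition_of_simply_connected_disconnected_boundary
    {X : Type*} [MetricSpace X] [SimplyConnectedSpace X] [LocallyPathConnectedSpace X]
    {q : ℕ} (Ω : Fin q → Set X)
    (hdisj : Pairwise (Function.onFun Disjoint Ω))
    (hne : ∀ i, (Ω i).Nonempty)
    (hopen : ∀ i, IsOpen (Ω i))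
    (hconn : ∀ i, IsConnected (Ω i))
    (hreg : ∀ i, Ω i = interior (closure (Ω i)))
    (hcover : ⋃ i, closure (Ω i) = univ)
    (hSigma : ¬ IsPreconnected (⋃ i, frontier (Ω i))) :
    ∃ (I J : Set (Fin q)) (ℓ : Fin q),
      I.Nonempty ∧ J.Nonempty ∧ ℓ ∉ I ∧ ℓ ∉ J ∧ Disjoint I J ∧ I ∪ J ∪ {ℓ} = univ ∧
      (univ : Set X) = (⋃ i ∈ I, closure (Ω i)) ∪ Ω ℓ ∪ (⋃ j ∈ J, closure (Ω j)) ∧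
      Disjoint (⋃ i ∈ I, closure (Ω i)) (Ω ℓ) ∧
      Disjoint (⋃ j ∈ J, closure (Ω j)) (Ω ℓ) ∧
      Disjoint (⋃ i ∈ I, closure (Ω i)) (⋃ j ∈ J, closure (Ω j)) ∧
      frontier (Ω ℓ)
        = frontier (⋃ i ∈ I, closure (Ω i)) ∪ frontier (⋃ j ∈ J, closure (Ω j)) ∧
      Disjoint (frontier (⋃ i ∈ I, closure (Ω i))) (frontier (⋃ j ∈ J, closure (Ω j))) ∧
      (frontier (⋃ i ∈ I, closure (Ω i))).Nonempty ∧
      (frontier (⋃ j ∈ J, closure (Ω j))).Nonempty := by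
  classical
  haveI : ConnectedSpace X := pathConnectedSpace_iff_connectedSpace.mp inferInstance
  have hπ := Real.pi_pos
  have h2π : (2 * Real.pi) ≠ 0 := by positivity
  -- basic disjointness facts
  have hF1 : ∀ i j : Fin q, i ≠ j → ∀ x ∈ closure (Ω i), x ∉ Ω j := by
    intro i j hij x hxc hxj
    obtain ⟨z, hzj, hzi⟩ := mem_closure_iff.mp hxc (Ω j) (hopen j) hxj
    exact absurd hzj ((hdisj hij).le_bot ⟨hzi, hzj⟩).elim
  have hfr : ∀ i : Fin q, frontier (Ω i) = closure (Ω i) \ Ω i :=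
    fun i => (hopen i).frontier_eq
  have hF2 : ∀ i j : Fin q, i ≠ j → ∀ x, x ∈ closure (Ω i) → x ∈ closure (Ω j) →
      x ∈ frontier (Ω i) ∧ x ∈ frontier (Ω j) := by
    intro i j hij x hxi hxj
    constructor
    · rw [hfr i]; exact ⟨hxi, hF1 j i hij.symm x hxj⟩
    · rw [hfr j]; exact ⟨hxj, hF1 i j hij x hxi⟩
  -- Σ and its separation
  set Sig : Set X := ⋃ i, frontier (Ω i) with hSig
  have hSigclosed : IsClosed Sig := isClosed_iUnion_of_finite (fun i => isClosed_frontier)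
  rw [IsPreconnected] at hSigma
  push_neg at hSigma
  obtain ⟨U, V, hUopen, hVopen, hcovUV, ⟨a, haSig, haU⟩, ⟨b, hbSig, hbV⟩, hUV⟩ := hSigma
  set A : Set X := Sig \ V with hA
  set B : Set X := Sig \ U with hB
  have hAclosed : IsClosed A := hSigclosed.sdiff hVopen
  have hBclosed : IsClosed B := hSigclosed.sdiff hUopen
  have hABdisj : ∀ z, z ∈ A → z ∈ B → False := by
    intro z hzA hzB
    rcases hcovUV hzA.1 with h | h
    · exact hzB.2 h
    · exact hzA.2 h
  have hABcover : ∀ z ∈ Sig, z ∈ A ∨ z ∈ B := by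
    intro z hz
    by_cases hzV : z ∈ V
    · right
      refine ⟨hz, fun hzU => ?_⟩
      have : (Sig ∩ (U ∩ V)).Nonempty := ⟨z, hz, hzU, hzV⟩
      rw [hUV] at this
      exact this.ne_empty rfl
    · exact Or.inl ⟨hz, hzV⟩
  have hane : a ∈ A := by
    refine ⟨haSig, fun haV => ?_⟩
    have : (Sig ∩ (U ∩ V)).Nonempty := ⟨a, haSig, haU, haV⟩
    rw [hUV] at this
    exact this.ne_empty rfl
  have hbne : b ∈ B := by
    refine ⟨hbSig, fun hbU => ?_⟩
    have : (Sig ∩ (U ∩ V)).Nonempty := ⟨b, hbSig, hbU, hbV⟩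
    rw [hUV] at this
    exact this.ne_empty rfl
  have hAsub : A ⊆ Sig := fun z hz => hz.1
  have hBsub : B ⊆ Sig := fun z hz => hz.1
  -- existence of a cell whose frontier meets both A and B
  have hℓex : ∃ ℓ : Fin q, (frontier (Ω ℓ) ∩ A).Nonempty ∧ (frontier (Ω ℓ) ∩ B).Nonempty := by
    by_contra hno
    push_neg at hno
    set T : Set (Fin q) := {i | frontier (Ω i) ⊆ A} with hT
    have hTB : ∀ i, i ∉ T → frontier (Ω i) ⊆ B := by
      intro i hiT
      obtain ⟨w, hwfr, hwA⟩ := not_subset.mp hiT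
      have hwSig : w ∈ Sig := mem_iUnion.mpr ⟨i, hwfr⟩
      have hwB : w ∈ B := (hABcover w hwSig).resolve_left hwA
      have hAe : frontier (Ω i) ∩ A = ∅ := by
        by_contra hne'
        rw [← Ne, ← nonempty_iff_ne_empty] at hne'
        have hBe : frontier (Ω i) ∩ B = ∅ := hno i hne'
        have hmem : w ∈ frontier (Ω i) ∩ B := ⟨hwfr, hwB⟩
        rw [hBe] at hmem
        exact absurd hmem (notMem_empty w)
      intro z hz
      have hzSig : z ∈ Sig := mem_iUnion.mpr ⟨i, hz⟩
      rcases hABcover z hzSig with hzA | hzB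
      · have hmem : z ∈ frontier (Ω i) ∩ A := ⟨hz, hzA⟩
        rw [hAe] at hmem
        exact absurd hmem (notMem_empty z)
      · exact hzB
    set SA : Set X := ⋃ i ∈ T, closure (Ω i) with hSA
    set SB : Set X := ⋃ i ∈ Tᶜ, closure (Ω i) with hSB
    have hSAclosed : IsClosed SA :=
      Set.Finite.isClosed_biUnion (Set.toFinite T) (fun i _ => isClosed_closure)
    have hSBclosed : IsClosed SB :=
      Set.Finite.isClosed_biUnion (Set.toFinite Tᶜ) (fun i _ => isClosed_closure)
    have hdisjAB : ∀ z, z ∈ SA → z ∈ SB → False := by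
      intro z hzA hzB
      obtain ⟨i, hiT, hzi⟩ := mem_iUnion₂.mp hzA
      obtain ⟨j, hjT, hzj⟩ := mem_iUnion₂.mp hzB
      have hij : i ≠ j := fun h => hjT (h ▸ hiT)
      obtain ⟨hfi, hfj⟩ := hF2 i j hij z hzi hzj
      exact hABdisj z (hiT hfi) (hTB j hjT hfj)
    have hSAB : SA ∪ SB = univ := by
      apply eq_univ_of_forall
      intro x
      have : x ∈ ⋃ i, closure (Ω i) := by rw [hcover]; exact mem_univ x
      obtain ⟨i, hi⟩ := mem_iUnion.mp this
      by_cases hiT : i ∈ T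
      · exact Or.inl (mem_iUnion₂.mpr ⟨i, hiT, hi⟩)
      · exact Or.inr (mem_iUnion₂.mpr ⟨i, hiT, hi⟩)
    have hSAne : SA.Nonempty := by
      obtain ⟨i, hifr⟩ := mem_iUnion.mp (hAsub hane)
      have hiT : i ∈ T := by
        by_contra hiT
        exact hABdisj a hane (hTB i hiT hifr)
      exact ⟨a, mem_iUnion₂.mpr ⟨i, hiT, frontier_subset_closure hifr⟩⟩
    have hSBne : SB.Nonempty := by
      obtain ⟨j, hjfr⟩ := mem_iUnion.mp (hBsub hbne)
      have hjT : j ∉ T := by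
        intro hjT
        exact hABdisj b (hjT hjfr) hbne
      exact ⟨b, mem_iUnion₂.mpr ⟨j, hjT, frontier_subset_closure hjfr⟩⟩
    have hcompl : SAᶜ = SB := by
      ext z
      constructor
      · intro hz
        rcases (eq_univ_iff_forall.mp hSAB z) with h | h
        · exact absurd h hz
        · exact h
      · intro hz hzA
        exact hdisjAB z hzA hz
    have hSAopen : IsOpen SA := by
      rw [← isClosed_compl_iff, hcompl]
      exact hSBclosed
    have : SA = univ := IsClopen.eq_univ ⟨hSAclosed, hSAopen⟩ hSAne
    obtain ⟨z, hz⟩ := hSBne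
    exact hdisjAB z (this ▸ mem_univ z) hz
  obtain ⟨ℓ, hPne, hQne⟩ := hℓex
  set P : Set X := frontier (Ω ℓ) ∩ A with hP
  set Q : Set X := frontier (Ω ℓ) ∩ B with hQ
  have hPclosed : IsClosed P := isClosed_frontier.inter hAclosed
  have hQclosed : IsClosed Q := isClosed_frontier.inter hBclosed
  have hPQdisj : Disjoint P Q := by
    rw [disjoint_left]
    intro z hzP hzQ
    exact hABdisj z hzP.2 hzQ.2
  have hPQunion : ∀ z ∈ frontier (Ω ℓ), z ∈ P ∨ z ∈ Q := by
    intro z hz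
    have : z ∈ Sig := mem_iUnion.mpr ⟨ℓ, hz⟩
    rcases hABcover z this with h | h
    · exact Or.inl ⟨hz, h⟩
    · exact Or.inr ⟨hz, h⟩
  -- the complement of Ω ℓ is covered by the other closures
  have hKmem : ∀ x, x ∉ Ω ℓ → ∃ i, i ≠ ℓ ∧ x ∈ closure (Ω i) := by
    intro x hx
    by_contra hnx
    push_neg at hnx
    set O : Set X := ⋂ i ∈ {i : Fin q | i ≠ ℓ}, (closure (Ω i))ᶜ with hO
    have hOopen : IsOpen O :=
      (Set.toFinite _).isOpen_biInter (fun i _ => isClosed_closure.isOpen_compl)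
    have hxO : x ∈ O := mem_biInter (fun i hi => hnx i hi)
    have hOsub : O ⊆ closure (Ω ℓ) := by
      intro z hz
      have : z ∈ ⋃ i, closure (Ω i) := by rw [hcover]; exact mem_univ z
      obtain ⟨i, hi⟩ := mem_iUnion.mp this
      by_cases hiℓ : i = ℓ
      · rwa [hiℓ] at hi
      · exact absurd hi (mem_iInter₂.mp hz i hiℓ)
    have hxint : x ∈ interior (closure (Ω ℓ)) :=
      mem_interior.mpr ⟨O, hOsub, hOopen, hxO⟩
    rw [← hreg ℓ] at hxint
    exact hx hxint
  obtain ⟨p, hpfr, hpA⟩ := hPne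
  have hpnotΩ : p ∉ Ω ℓ := ((hfr ℓ) ▸ hpfr).2
  obtain ⟨i₀, hi₀ℓ, hpi₀⟩ := hKmem p hpnotΩ
  set r : Fin q → Fin q → Prop :=
    fun i j => i ≠ ℓ ∧ j ≠ ℓ ∧ (closure (Ω i) ∩ closure (Ω j)).Nonempty with hr
  -- the key claim (uses simple connectivity through the global lift)
  have hJne : ∃ j, j ≠ ℓ ∧ ¬ Relation.ReflTransGen r i₀ j := by
    by_contra hall
    push_neg at hall
    -- Urysohn function: 0 on P, 1 on Q
    obtain ⟨u, hu0, hu1, hu01⟩ := exists_continuous_zero_one_of_isClosed hPclosed hQclosed hPQdisj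
    set f : X → ℂ := fun x => if x ∈ closure (Ω ℓ)
      then Complex.exp ((Real.pi * u x : ℝ) * Complex.I)
      else Complex.exp ((-(Real.pi * u x) : ℝ) * Complex.I) with hfdef
    have hnormf : ∀ x, ‖f x‖ = 1 := by
      intro x
      simp only [hfdef]
      split <;> rw [Complex.norm_exp_ofReal_mul_I]
    have hfrval : ∀ x ∈ frontier (Ω ℓ),
        Complex.exp ((Real.pi * u x : ℝ) * Complex.I)
          = Complex.exp ((-(Real.pi * u x) : ℝ) * Complex.I) := by
      intro x hx
      rcases hPQunion x hx with hxP | hxQ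
      · have hux : u x = 0 := hu0 hxP
        rw [hux]
        norm_num
      · have hux : u x = 1 := hu1 hxQ
        rw [hux]
        have e1 : ((Real.pi * 1 : ℝ) : ℂ) * Complex.I = Real.pi * Complex.I := by
          push_cast; ring
        have e2 : ((-(Real.pi * 1) : ℝ) : ℂ) * Complex.I = -(Real.pi * Complex.I) := by
          push_cast; ring
        rw [e1, e2, Complex.exp_neg, Complex.exp_pi_mul_I]
        norm_num
    have hfcont : Continuous f := by
      apply Continuous.if
      · intro x hx
        have hx' : x ∈ frontier (Ω ℓ) := frontier_closure_subset hx
        exact hfrval x hx'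
      · exact Complex.continuous_exp.comp
          ((Complex.continuous_ofReal.comp (continuous_const.mul u.continuous)).mul
            continuous_const)
      · exact Complex.continuous_exp.comp
          ((Complex.continuous_ofReal.comp (continuous_const.mul u.continuous).neg).mul
            continuous_const)
    obtain ⟨θ, hθcont, hθlift⟩ := exists_global_lift hfcont hnormf
    obtain ⟨q', hq'fr, hq'B⟩ := hQne
    have hpH : p ∈ closure (Ω ℓ) := frontier_subset_closure hpfr
    have hq'H : q' ∈ closure (Ω ℓ) := frontier_subset_closure hq'fr
    have hup : u p = 0 := hu0 ⟨hpfr, hpA⟩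
    have huq : u q' = 1 := hu1 ⟨hq'fr, hq'B⟩
    -- constancy of (θ - π u)/(2π) on the closure of Ω ℓ
    set vH : X → ℝ := fun x => (θ x - Real.pi * u x) / (2 * Real.pi) with hvH
    have hvHint : ∀ x ∈ closure (Ω ℓ), ∃ k : ℤ, vH x = k := by
      intro x hx
      have h1 : Complex.exp (θ x * Complex.I)
          = Complex.exp ((Real.pi * u x : ℝ) * Complex.I) := by
        rw [hθlift x]
        simp only [hfdef]
        rw [if_pos hx]
      obtain ⟨k, hk⟩ := exp_sub_exp h1
      refine ⟨k, ?_⟩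
      simp only [hvH]
      rw [hk]
      field_simp
    have hvHcont : ContinuousOn vH (closure (Ω ℓ)) :=
      ((hθcont.sub (continuous_const.mul u.continuous)).div_const _).continuousOn
    have hHconn : IsPreconnected (closure (Ω ℓ)) := (hconn ℓ).isPreconnected.closure
    have hH := int_valued_const hHconn hvHcont hvHint hpH hq'H
    -- the K-side function
    set vK : X → ℝ := fun x => (θ x + Real.pi * u x) / (2 * Real.pi) with hvK
    have hvKcont : ContinuousOn vK univ :=
      ((hθcont.add (continuous_const.mul u.continuous)).div_const _).continuousOn
    have hvKint : ∀ i, i ≠ ℓ → ∀ x ∈ closure (Ω i), ∃ k : ℤ, vK x = k := by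
      intro i hiℓ x hx
      by_cases hxH : x ∈ closure (Ω ℓ)
      · have hxfr : x ∈ frontier (Ω ℓ) := (hF2 i ℓ hiℓ x hx hxH).2
        have h1 : Complex.exp (θ x * Complex.I)
            = Complex.exp ((Real.pi * u x : ℝ) * Complex.I) := by
          rw [hθlift x]
          simp only [hfdef]
          rw [if_pos hxH]
        obtain ⟨k, hk⟩ := exp_sub_exp h1
        rcases hPQunion x hxfr with hxP | hxQ
        · have hux : u x = 0 := hu0 hxP
          refine ⟨k, ?_⟩
          simp only [hvK]
          rw [hux] at hk ⊢
          rw [mul_zero, add_zero]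
          rw [mul_zero, sub_zero] at hk
          rw [hk]
          field_simp
        · have hux : u x = 1 := hu1 hxQ
          refine ⟨k + 1, ?_⟩
          simp only [hvK]
          rw [hux] at hk ⊢
          rw [mul_one] at hk ⊢
          have : θ x + Real.pi = (k + 1 : ℤ) * (2 * Real.pi) := by
            push_cast
            nlinarith [hk]
          rw [this]
          field_simp
      · have h1 : Complex.exp (θ x * Complex.I)
            = Complex.exp ((-(Real.pi * u x) : ℝ) * Complex.I) := by
          rw [hθlift x]
          simp only [hfdef]
          rw [if_neg hxH]
        obtain ⟨k, hk⟩ := exp_sub_exp h1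
        refine ⟨k, ?_⟩
        simp only [hvK]
        have : θ x + Real.pi * u x = k * (2 * Real.pi) := by linarith [hk]
        rw [this]
        field_simp
    -- propagation of the constant along the touching relation
    have hprop : ∀ j, Relation.ReflTransGen r i₀ j → j ≠ ℓ → ∀ y ∈ closure (Ω j),
        vK y = vK p := by
      intro j hR
      induction hR with
      | refl =>
        intro _ y hy
        exact int_valued_const ((hconn i₀).isPreconnected.closure)
          (hvKcont.mono (subset_univ _)) (hvKint i₀ hi₀ℓ) hy hpi₀
      | @tail b c hR' hstep ih =>
        intro hcℓ y hy
        obtain ⟨hbℓ, hcℓ', ⟨z, hzb, hzc⟩⟩ := hstep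
        have h1 : vK y = vK z :=
          int_valued_const ((hconn c).isPreconnected.closure)
            (hvKcont.mono (subset_univ _)) (hvKint c hcℓ') hy hzc
        rw [h1]
        exact ih hbℓ z hzb
    have hq'notΩ : q' ∉ Ω ℓ := ((hfr ℓ) ▸ hq'fr).2
    obtain ⟨j₁, hj₁ℓ, hq'j₁⟩ := hKmem q' hq'notΩ
    have hKpq := hprop j₁ (hall j₁ hj₁ℓ) hj₁ℓ q' hq'j₁
    -- derive the numeric contradiction
    simp only [hvH, hvK, hup, huq] at hH hKpq
    rw [mul_zero, sub_zero, mul_one] at hH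
    rw [mul_one, mul_zero, add_zero] at hKpq
    have e1 : θ p = θ q' - Real.pi := by
      field_simp at hH
      linarith
    have e2 : θ q' + Real.pi = θ p := by
      field_simp at hKpq
      linarith
    linarith
  obtain ⟨j₀, hj₀ℓ, hj₀R⟩ := hJne
  set I : Set (Fin q) := {i | i ≠ ℓ ∧ Relation.ReflTransGen r i₀ i} with hI
  set J : Set (Fin q) := {j | j ≠ ℓ ∧ ¬ Relation.ReflTransGen r i₀ j} with hJ
  have hi₀I : i₀ ∈ I := ⟨hi₀ℓ, Relation.ReflTransGen.refl⟩
  have hj₀J : j₀ ∈ J := ⟨hj₀ℓ, hj₀R⟩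
  set CI : Set X := ⋃ i ∈ I, closure (Ω i) with hCI
  set CJ : Set X := ⋃ j ∈ J, closure (Ω j) with hCJ
  have hCIclosed : IsClosed CI :=
    Set.Finite.isClosed_biUnion (Set.toFinite I) (fun i _ => isClosed_closure)
  have hCJclosed : IsClosed CJ :=
    Set.Finite.isClosed_biUnion (Set.toFinite J) (fun j _ => isClosed_closure)
  -- no closure of an I-cell meets a closure of a J-cell
  have hIJcl : ∀ i ∈ I, ∀ j ∈ J, ∀ x, x ∈ closure (Ω i) → x ∈ closure (Ω j) → False := by
    intro i hiI j hjJ x hxi hxj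
    exact hjJ.2 (hiI.2.tail ⟨hiI.1, hjJ.1, ⟨x, hxi, hxj⟩⟩)
  have hCICJdisj : Disjoint CI CJ := by
    rw [disjoint_left]
    intro x hxI hxJ
    obtain ⟨i, hiI, hxi⟩ := mem_iUnion₂.mp hxI
    obtain ⟨j, hjJ, hxj⟩ := mem_iUnion₂.mp hxJ
    exact hIJcl i hiI j hjJ x hxi hxj
  have hCIΩdisj : Disjoint CI (Ω ℓ) := by
    rw [disjoint_left]
    intro x hxI hxΩ
    obtain ⟨i, hiI, hxi⟩ := mem_iUnion₂.mp hxI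
    exact hF1 i ℓ hiI.1 x hxi hxΩ
  have hCJΩdisj : Disjoint CJ (Ω ℓ) := by
    rw [disjoint_left]
    intro x hxJ hxΩ
    obtain ⟨j, hjJ, hxj⟩ := mem_iUnion₂.mp hxJ
    exact hF1 j ℓ hjJ.1 x hxj hxΩ
  -- covering
  have hcover3 : (univ : Set X) = CI ∪ Ω ℓ ∪ CJ := by
    apply Set.eq_of_subset_of_subset _ (subset_univ _)
    intro x _
    by_cases hxΩ : x ∈ Ω ℓ
    · exact Or.inl (Or.inr hxΩ)
    · obtain ⟨i, hiℓ, hxi⟩ := hKmem x hxΩ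
      by_cases hiR : Relation.ReflTransGen r i₀ i
      · exact Or.inl (Or.inl (mem_iUnion₂.mpr ⟨i, ⟨hiℓ, hiR⟩, hxi⟩))
      · exact Or.inr (mem_iUnion₂.mpr ⟨i, ⟨hiℓ, hiR⟩, hxi⟩)
  -- frontier of Ω ℓ is inside CI ∪ CJ
  have hfrK : frontier (Ω ℓ) ⊆ CI ∪ CJ := by
    intro x hx
    have hxΩ : x ∉ Ω ℓ := ((hfr ℓ) ▸ hx).2
    obtain ⟨i, hiℓ, hxi⟩ := hKmem x hxΩ
    by_cases hiR : Relation.ReflTransGen r i₀ i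
    · exact Or.inl (mem_iUnion₂.mpr ⟨i, ⟨hiℓ, hiR⟩, hxi⟩)
    · exact Or.inr (mem_iUnion₂.mpr ⟨i, ⟨hiℓ, hiR⟩, hxi⟩)
  -- CI ∩ closure (Ω ℓ) = CI ∩ frontier (Ω ℓ), and same for CJ
  have hCIcap : CI ∩ closure (Ω ℓ) = CI ∩ frontier (Ω ℓ) := by
    apply Set.eq_of_subset_of_subset
    · rintro x ⟨hxI, hxcl⟩
      obtain ⟨i, hiI, hxi⟩ := mem_iUnion₂.mp hxI
      exact ⟨hxI, (hF2 i ℓ hiI.1 x hxi hxcl).2⟩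
    · rintro x ⟨hxI, hxfr⟩
      exact ⟨hxI, frontier_subset_closure hxfr⟩
  have hCJcap : CJ ∩ closure (Ω ℓ) = CJ ∩ frontier (Ω ℓ) := by
    apply Set.eq_of_subset_of_subset
    · rintro x ⟨hxJ, hxcl⟩
      obtain ⟨j, hjJ, hxj⟩ := mem_iUnion₂.mp hxJ
      exact ⟨hxJ, (hF2 j ℓ hjJ.1 x hxj hxcl).2⟩
    · rintro x ⟨hxJ, hxfr⟩
      exact ⟨hxJ, frontier_subset_closure hxfr⟩
  -- complements
  have hCIcompl : CIᶜ = Ω ℓ ∪ CJ := by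
    ext x
    constructor
    · intro hx
      rcases (eq_univ_iff_forall.mp hcover3.symm x : x ∈ CI ∪ Ω ℓ ∪ CJ) with h | h
      · rcases h with h | h
        · exact absurd h hx
        · exact Or.inl h
      · exact Or.inr h
    · intro hx hxI
      rcases hx with h | h
      · exact (disjoint_left.mp hCIΩdisj) hxI h
      · exact (disjoint_left.mp hCICJdisj) hxI h
  have hCJcompl : CJᶜ = Ω ℓ ∪ CI := by
    ext x
    constructor
    · intro hx
      rcases (eq_univ_iff_forall.mp hcover3.symm x : x ∈ CI ∪ Ω ℓ ∪ CJ) with h | h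
      · rcases h with h | h
        · exact Or.inr h
        · exact Or.inl h
      · exact absurd h hx
    · intro hx hxJ
      rcases hx with h | h
      · exact (disjoint_left.mp hCJΩdisj) hxJ h
      · exact (disjoint_left.mp hCICJdisj) h hxJ
  -- frontier computations
  have hfrCI : frontier CI = CI ∩ frontier (Ω ℓ) := by
    rw [frontier_eq_closure_inter_closure, hCIclosed.closure_eq, hCIcompl, closure_union,
      hCJclosed.closure_eq, Set.inter_union_distrib_left, hCIcap,
      disjoint_iff_inter_eq_empty.mp hCICJdisj, union_empty]
  have hfrCJ : frontier CJ = CJ ∩ frontier (Ω ℓ) := by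
    rw [frontier_eq_closure_inter_closure, hCJclosed.closure_eq, hCJcompl, closure_union,
      hCIclosed.closure_eq, Set.inter_union_distrib_left, hCJcap,
      inter_comm CJ CI, disjoint_iff_inter_eq_empty.mp hCICJdisj, union_empty]
  have hpCI : p ∈ CI := mem_iUnion₂.mpr ⟨i₀, hi₀I, hpi₀⟩
  -- frontier CJ nonempty
  have hfrCJne : (CJ ∩ frontier (Ω ℓ)).Nonempty := by
    by_contra hempty
    rw [not_nonempty_iff_eq_empty] at hempty
    have hclΩCJ : closure (Ω ℓ) ∩ CJ = ∅ := by
      rw [← Set.not_nonempty_iff_eq_empty]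
      rintro ⟨x, hxcl, hxCJ⟩
      have : x ∈ CJ ∩ closure (Ω ℓ) := ⟨hxCJ, hxcl⟩
      rw [hCJcap, hempty] at this
      exact absurd this (notMem_empty x)
    have hCJopen : IsOpen CJ := by
      rw [← isClosed_compl_iff, hCJcompl]
      have : Ω ℓ ∪ CI = closure (Ω ℓ) ∪ CI := by
        apply Set.eq_of_subset_of_subset
        · exact union_subset_union_left _ subset_closure
        · intro x hx
          rcases hx with hx | hx
          · rw [closure_eq_self_union_frontier] at hx
            rcases hx with hx | hx
            · exact Or.inl hx
            · rcases hfrK hx with h | h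
              · exact Or.inr h
              · exfalso
                have : x ∈ CJ ∩ frontier (Ω ℓ) := ⟨h, hx⟩
                rw [hempty] at this
                exact absurd this (notMem_empty x)
          · exact Or.inr hx
      rw [this]
      exact isClosed_closure.union hCIclosed
    have hCJne' : CJ.Nonempty := by
      obtain ⟨w, hw⟩ := hne j₀
      exact ⟨w, mem_iUnion₂.mpr ⟨j₀, hj₀J, subset_closure hw⟩⟩
    have hCJuniv : CJ = univ := IsClopen.eq_univ ⟨hCJclosed, hCJopen⟩ hCJne'
    obtain ⟨w, hw⟩ := hne ℓ
    have : w ∈ CJ := hCJuniv ▸ mem_univ w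
    exact (disjoint_left.mp hCJΩdisj) this hw
  -- put everything together
  refine ⟨I, J, ℓ, ⟨i₀, hi₀I⟩, ⟨j₀, hj₀J⟩, fun h => h.1 rfl, fun h => h.1 rfl, ?_, ?_, ?_, ?_,
    hCJΩdisj, hCICJdisj, ?_, ?_, ?_, ?_⟩
  · rw [disjoint_left]
    intro i hiI hiJ
    exact hiJ.2 hiI.2
  · apply eq_univ_of_forall
    intro i
    by_cases hiℓ : i = ℓ
    · exact Or.inr (by rw [hiℓ]; exact rfl)
    · by_cases hiR : Relation.ReflTransGen r i₀ i
      · exact Or.inl (Or.inl ⟨hiℓ, hiR⟩)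
      · exact Or.inl (Or.inr ⟨hiℓ, hiR⟩)
  · exact hcover3
  · exact hCIΩdisj
  · rw [hfrCI, hfrCJ, ← Set.union_inter_distrib_right]
    apply Set.eq_of_subset_of_subset
    · intro x hx
      exact ⟨hfrK hx, hx⟩
    · exact inter_subset_right
  · rw [hfrCI, hfrCJ]
    exact (hCICJdisj.mono inter_subset_left inter_subset_left)
  · rw [hfrCI]
    exact ⟨p, hpCI, hpfr⟩
  · rw [hfrCJ]
    exact hfrCJne

end
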